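/- Let D be a real n×d matrix, ν > 0, γ > 0 with ν‖DᵀD‖ < γ², and P a real symmetric n×n matrix with 0 ≤ P ≤ νI. Then ‖P D (γ²I_d − Dᵀ P D)⁻¹ Dᵀ P‖ ≤ ν² ‖DᵀD‖ / (γ² − ν‖DᵀD‖). -/

import Mathlib

open Matrix
set_option maxHeartbeats 2000000

/-- The spectral norm (operator 2-norm) of a real matrix. -/
noncomputable def specNorm {m n : ℕ} (M : Matrix (Fin m) (Fin n) ℝ) : ℝ :=
  ‖LinearMap.toContinuousLinearMap (Matrix.toEuclideanLin M)‖

namespace SpecNormAux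

open ContinuousLinearMap

/-- The continuous linear map associated to a matrix. -/
noncomputable def Tm {m n : ℕ} (M : Matrix (Fin m) (Fin n) ℝ) :
    EuclideanSpace ℝ (Fin n) →L[ℝ] EuclideanSpace ℝ (Fin m) :=
  LinearMap.toContinuousLinearMap (Matrix.toEuclideanLin M)

lemma specNorm_eq {m n : ℕ} (M : Matrix (Fin m) (Fin n) ℝ) : specNorm M = ‖Tm M‖ := rfl

lemma Tm_apply {m n : ℕ} (M : Matrix (Fin m) (Fin n) ℝ) (v : EuclideanSpace ℝ (Fin n)) :
    Tm M v = (WithLp.equiv 2 (Fin m → ℝ)).symm (M *ᵥ (WithLp.equiv 2 (Fin n → ℝ) v)) := rfl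

lemma Tm_mul {m n p : ℕ} (A : Matrix (Fin m) (Fin n) ℝ) (B : Matrix (Fin n) (Fin p) ℝ) :
    Tm (A * B) = (Tm A).comp (Tm B) := by
  apply ContinuousLinearMap.ext
  intro v
  simp [Tm_apply, Matrix.mulVec_mulVec]

lemma Tm_one {k : ℕ} : Tm (1 : Matrix (Fin k) (Fin k) ℝ) = ContinuousLinearMap.id ℝ _ := by
  apply ContinuousLinearMap.ext
  intro v
  simp [Tm_apply]

lemma inner_Tm {m n : ℕ} (M : Matrix (Fin m) (Fin n) ℝ) (x : EuclideanSpace ℝ (Fin m))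
    (y : EuclideanSpace ℝ (Fin n)) :
    inner ℝ x (Tm M y) = (WithLp.equiv 2 (Fin m → ℝ) x) ⬝ᵥ (M *ᵥ (WithLp.equiv 2 (Fin n → ℝ) y)) := by
  rw [Tm_apply, EuclideanSpace.inner_eq_star_dotProduct]
  simp [dotProduct_comm]

lemma quad_nonneg {k : ℕ} {Q : Matrix (Fin k) (Fin k) ℝ} (hQ : Q.PosSemidef)
    (x : EuclideanSpace ℝ (Fin k)) : (0:ℝ) ≤ inner ℝ x (Tm Q x) := by
  rw [inner_Tm]
  simpa using hQ.dotProduct_mulVec_nonneg (WithLp.equiv 2 (Fin k → ℝ) x)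

lemma quad_smul_one {k : ℕ} (c : ℝ) (x : EuclideanSpace ℝ (Fin k)) :
    (inner ℝ x (Tm (c • (1 : Matrix (Fin k) (Fin k) ℝ)) x) : ℝ) = c * ‖x‖ ^ 2 := by
  rw [inner_Tm, smul_mulVec, one_mulVec, dotProduct_smul, smul_eq_mul]
  congr 1
  have : (inner ℝ x x : ℝ) = ‖x‖ ^ 2 := real_inner_self_eq_norm_sq x
  rw [← this, EuclideanSpace.inner_eq_star_dotProduct]
  simp

lemma Tm_transpose {m k : ℕ} (A : Matrix (Fin m) (Fin k) ℝ) :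
    Tm Aᵀ = ContinuousLinearMap.adjoint (Tm A) := by
  have h : Aᵀ = Aᴴ := by
    ext i j
    simp [Matrix.conjTranspose_apply]
  rw [h, Tm, Matrix.toEuclideanLin_conjTranspose_eq_adjoint]
  rfl

lemma norm_Tm_sq {m k : ℕ} (A : Matrix (Fin m) (Fin k) ℝ) (x : EuclideanSpace ℝ (Fin k)) :
    ‖Tm A x‖ ^ 2 = inner ℝ x (Tm (Aᵀ * A) x) := by
  rw [Tm_mul, ContinuousLinearMap.comp_apply, Tm_transpose,
    ContinuousLinearMap.adjoint_inner_right, real_inner_self_eq_norm_sq]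

lemma specNorm_transpose_mul_self {m k : ℕ} (A : Matrix (Fin m) (Fin k) ℝ) :
    specNorm (Aᵀ * A) = specNorm A * specNorm A := by
  rw [specNorm_eq, specNorm_eq, Tm_mul, Tm_transpose]
  exact ContinuousLinearMap.norm_adjoint_comp_self (Tm A)

lemma specNorm_transpose {m k : ℕ} (A : Matrix (Fin m) (Fin k) ℝ) :
    specNorm Aᵀ = specNorm A := by
  rw [specNorm_eq, specNorm_eq, Tm_transpose]
  exact LinearIsometryEquiv.norm_map ContinuousLinearMap.adjoint (Tm A)

/-- If `0 ≤ Q ≤ c•1` then `‖Q‖ ≤ c`. -/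
lemma norm_Tm_le {k : ℕ} {Q : Matrix (Fin k) (Fin k) ℝ} {c : ℝ} (hc : 0 ≤ c)
    (hQ : Q.PosSemidef) (hQc : (c • (1 : Matrix (Fin k) (Fin k) ℝ) - Q).PosSemidef) :
    ‖Tm Q‖ ≤ c := by
  have hsym : Qᵀ = Q := by
    have h := hQ.1
    ext i j
    calc Qᵀ i j = star (Q j i) := rfl
    _ = Qᴴ i j := rfl
    _ = Q i j := by rw [h]
  -- the key positivity fact : c • Q - Q * Q ≥ 0
  have key : (c • Q - Q * Q).PosSemidef := by
    obtain ⟨S, hs, hSS⟩ : ∃ S : Matrix (Fin k) (Fin k) ℝ, S.PosSemidef ∧ S * S = Q :=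
      open scoped MatrixOrder in
        ⟨CFC.sqrt Q, (CFC.sqrt_nonneg Q).posSemidef, CFC.sqrt_mul_sqrt_self Q hQ.nonneg⟩
    have h1 : (S * (c • (1 : Matrix (Fin k) (Fin k) ℝ) - Q) * Sᴴ).PosSemidef :=
      hQc.mul_mul_conjTranspose_same S
    rw [hs.1] at h1
    have heq : S * (c • (1 : Matrix (Fin k) (Fin k) ℝ) - Q) * S
        = c • Q - Q * Q := by
      rw [Matrix.mul_sub, Matrix.sub_mul, Matrix.mul_smul, Matrix.mul_one, Matrix.smul_mul, hSS]
      congr 1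
      rw [← hSS]
      simp only [Matrix.mul_assoc]
    rwa [heq] at h1
  have hquadc : ∀ x : EuclideanSpace ℝ (Fin k), (inner ℝ x (Tm Q x) : ℝ) ≤ c * ‖x‖ ^ 2 := by
    intro x
    have h0 := quad_nonneg hQc x
    have hlin : Tm (c • (1 : Matrix (Fin k) (Fin k) ℝ) - Q)
        = Tm (c • (1 : Matrix (Fin k) (Fin k) ℝ)) - Tm Q := by
      simp [Tm, map_sub]
    rw [hlin] at h0
    simp only [ContinuousLinearMap.sub_apply, inner_sub_right] at h0
    have h1 := quad_smul_one c x
    linarith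
  apply ContinuousLinearMap.opNorm_le_bound _ hc
  intro x
  have h2 : ‖Tm Q x‖ ^ 2 = inner ℝ x (Tm (Q * Q) x) := by
    have := norm_Tm_sq Q x
    rwa [hsym] at this
  have h3 : (inner ℝ x (Tm (Q * Q) x) : ℝ) ≤ c * inner ℝ x (Tm Q x) := by
    have h0 := quad_nonneg key x
    have hlin : Tm (c • Q - Q * Q) = c • Tm Q - Tm (Q * Q) := by
      simp [Tm, map_sub, _root_.map_smul]
    rw [hlin] at h0
    simp only [ContinuousLinearMap.sub_apply, ContinuousLinearMap.smul_apply, inner_sub_right,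
      inner_smul_right] at h0
    linarith
  have h4 := hquadc x
  have h5 : ‖Tm Q x‖ ^ 2 ≤ (c * ‖x‖) ^ 2 := by nlinarith [quad_nonneg hQ x, norm_nonneg x]
  have h6 : (0:ℝ) ≤ c * ‖x‖ := by positivity
  nlinarith [norm_nonneg (Tm Q x)]

end SpecNormAux

open SpecNormAux

/-- Uniform bound on the correction term `P̃ − P = P D (γ²I − Dᵀ P D)⁻¹ Dᵀ P`
of the modified Riccati equation: if `ν‖DᵀD‖ < γ²` and `0 ≤ P ≤ νI` is
symmetric, then `‖P D (γ²I − Dᵀ P D)⁻¹ Dᵀ P‖ ≤ ν²‖DᵀD‖/(γ² − ν‖DᵀD‖)`. -/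
theorem stmt_12 {n d : ℕ} (D : Matrix (Fin n) (Fin d) ℝ) (ν γ : ℝ)
    (hν : 0 < ν) (hγ : 0 < γ) (hsmall : ν * specNorm (Dᵀ * D) < γ ^ 2)
    (P : Matrix (Fin n) (Fin n) ℝ)
    (hP : P.PosSemidef)
    (hPν : (ν • (1 : Matrix (Fin n) (Fin n) ℝ) - P).PosSemidef) :
    specNorm (P * D * (γ ^ 2 • (1 : Matrix (Fin d) (Fin d) ℝ) - Dᵀ * P * D)⁻¹ * Dᵀ * P)
      ≤ ν ^ 2 * specNorm (Dᵀ * D) / (γ ^ 2 - ν * specNorm (Dᵀ * D)) := by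
  classical
  set t := specNorm (Dᵀ * D) with ht
  set s := specNorm D with hs
  have hsnorm : s = ‖Tm D‖ := rfl
  have hsnn : (0:ℝ) ≤ s := by rw [hsnorm]; exact norm_nonneg _
  have hts : t = s * s := by rw [ht, hs]; exact specNorm_transpose_mul_self D
  set ε := γ ^ 2 - ν * t with hε
  have hεpos : 0 < ε := by rw [hε]; linarith
  set M := γ ^ 2 • (1 : Matrix (Fin d) (Fin d) ℝ) - Dᵀ * P * D with hM
  -- quadratic bound for P
  have hPquad : ∀ u : EuclideanSpace ℝ (Fin n), (inner ℝ u (Tm P u) : ℝ) ≤ ν * ‖u‖ ^ 2 := by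
    intro u
    have h0 := quad_nonneg hPν u
    have hlin : Tm (ν • (1 : Matrix (Fin n) (Fin n) ℝ) - P)
        = Tm (ν • (1 : Matrix (Fin n) (Fin n) ℝ)) - Tm P := by
      simp [Tm, map_sub]
    rw [hlin] at h0
    simp only [ContinuousLinearMap.sub_apply, inner_sub_right] at h0
    have h1 := quad_smul_one ν u
    linarith
  -- quadratic lower bound for M
  have hMquad : ∀ x : EuclideanSpace ℝ (Fin d), ε * ‖x‖ ^ 2 ≤ inner ℝ x (Tm M x) := by
    intro x
    have e1 : (inner ℝ x (Tm (Dᵀ * P * D) x) : ℝ) = inner ℝ (Tm D x) (Tm P (Tm D x)) := by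
      rw [Tm_mul, Tm_mul, ContinuousLinearMap.comp_apply, ContinuousLinearMap.comp_apply,
        Tm_transpose, ContinuousLinearMap.adjoint_inner_right]
    have e2 : (inner ℝ (Tm D x) (Tm P (Tm D x)) : ℝ) ≤ ν * t * ‖x‖ ^ 2 := by
      have hb := hPquad (Tm D x)
      have hop : ‖Tm D x‖ ≤ s * ‖x‖ := by
        rw [hsnorm]; exact (Tm D).le_opNorm x
      have : ν * ‖Tm D x‖ ^ 2 ≤ ν * (s * ‖x‖) ^ 2 := by
        apply mul_le_mul_of_nonneg_left _ hν.le
        have h1 : (0:ℝ) ≤ ‖Tm D x‖ := norm_nonneg _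
        nlinarith
      calc (inner ℝ (Tm D x) (Tm P (Tm D x)) : ℝ) ≤ ν * ‖Tm D x‖ ^ 2 := hb
      _ ≤ ν * (s * ‖x‖) ^ 2 := this
      _ = ν * t * ‖x‖ ^ 2 := by rw [hts]; ring
    have hlin : Tm M = Tm (γ ^ 2 • (1 : Matrix (Fin d) (Fin d) ℝ)) - Tm (Dᵀ * P * D) := by
      simp [Tm, hM, map_sub]
    rw [hlin]
    simp only [ContinuousLinearMap.sub_apply, inner_sub_right]
    have h1 := quad_smul_one (γ ^ 2) x
    rw [h1]
    have : (inner ℝ x (Tm (Dᵀ * P * D) x) : ℝ) ≤ ν * t * ‖x‖ ^ 2 := by rw [e1]; exact e2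
    have hexp : ε = γ ^ 2 - ν * t := hε
    nlinarith [norm_nonneg x]
  -- M is invertible
  have hMinj : Function.Injective (M.mulVec) := by
    intro a b hab
    have h0 : Tm M ((WithLp.equiv 2 (Fin d → ℝ)).symm a)
        = Tm M ((WithLp.equiv 2 (Fin d → ℝ)).symm b) := by
      rw [Tm_apply, Tm_apply]
      simp only [Equiv.apply_symm_apply]
      rw [hab]
    have h1 := hMquad ((WithLp.equiv 2 (Fin d → ℝ)).symm a - (WithLp.equiv 2 (Fin d → ℝ)).symm b)
    rw [map_sub, h0, sub_self, inner_zero_right] at h1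
    have h2 : ‖(WithLp.equiv 2 (Fin d → ℝ)).symm a - (WithLp.equiv 2 (Fin d → ℝ)).symm b‖ ^ 2
        ≤ 0 := by nlinarith
    have h3 : (WithLp.equiv 2 (Fin d → ℝ)).symm a - (WithLp.equiv 2 (Fin d → ℝ)).symm b = 0 := by
      have := norm_nonneg ((WithLp.equiv 2 (Fin d → ℝ)).symm a
        - (WithLp.equiv 2 (Fin d → ℝ)).symm b)
      have hnn : ‖(WithLp.equiv 2 (Fin d → ℝ)).symm a
          - (WithLp.equiv 2 (Fin d → ℝ)).symm b‖ = 0 := by nlinarith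
      exact norm_eq_zero.mp hnn
    have h4 : (WithLp.equiv 2 (Fin d → ℝ)).symm a = (WithLp.equiv 2 (Fin d → ℝ)).symm b :=
      sub_eq_zero.mp h3
    exact (WithLp.equiv 2 (Fin d → ℝ)).symm.injective h4
  have hMunit : IsUnit M := Matrix.mulVec_injective_iff_isUnit.mp hMinj
  have hMMinv : M * M⁻¹ = 1 := Matrix.mul_nonsing_inv M ((Matrix.isUnit_iff_isUnit_det M).mp hMunit)
  -- norm bound for M⁻¹
  have hMinvnorm : ‖Tm M⁻¹‖ ≤ ε⁻¹ := by
    apply ContinuousLinearMap.opNorm_le_bound _ (by positivity)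
    intro u
    have hMy : Tm M (Tm M⁻¹ u) = u := by
      rw [← ContinuousLinearMap.comp_apply, ← Tm_mul, hMMinv, Tm_one]
      rfl
    have h1 : ε * ‖Tm M⁻¹ u‖ ^ 2 ≤ inner ℝ (Tm M⁻¹ u) u := by
      have := hMquad (Tm M⁻¹ u)
      rwa [hMy] at this
    have h2 : (inner ℝ (Tm M⁻¹ u) u : ℝ) ≤ ‖Tm M⁻¹ u‖ * ‖u‖ := real_inner_le_norm _ u
    rcases eq_or_lt_of_le (norm_nonneg (Tm M⁻¹ u)) with h0 | h0
    · rw [← h0]; positivity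
    · rw [inv_mul_eq_div, le_div_iff₀ hεpos]
      nlinarith
  -- norm bound for P
  have hPnorm : ‖Tm P‖ ≤ ν := norm_Tm_le hν.le hP hPν
  -- assemble
  have hDt : ‖Tm Dᵀ‖ = s := by
    rw [← specNorm_eq, hs]
    exact specNorm_transpose D
  have b1 : ‖(Tm P).comp (Tm D)‖ ≤ ν * s := by
    refine le_trans (ContinuousLinearMap.opNorm_comp_le _ _) ?_
    rw [← hsnorm] at *
    exact mul_le_mul hPnorm le_rfl hsnn hν.le
  have b2 : ‖((Tm P).comp (Tm D)).comp (Tm M⁻¹)‖ ≤ ν * s * ε⁻¹ := by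
    refine le_trans (ContinuousLinearMap.opNorm_comp_le _ _) ?_
    exact mul_le_mul b1 hMinvnorm (norm_nonneg _) (by positivity)
  have b3 : ‖(((Tm P).comp (Tm D)).comp (Tm M⁻¹)).comp (Tm Dᵀ)‖ ≤ ν * s * ε⁻¹ * s := by
    refine le_trans (ContinuousLinearMap.opNorm_comp_le _ _) ?_
    rw [hDt] at *
    exact mul_le_mul b2 le_rfl hsnn (by positivity)
  have b4 : ‖((((Tm P).comp (Tm D)).comp (Tm M⁻¹)).comp (Tm Dᵀ)).comp (Tm P)‖
      ≤ ν * s * ε⁻¹ * s * ν := by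
    refine le_trans (ContinuousLinearMap.opNorm_comp_le _ _) ?_
    exact mul_le_mul b3 hPnorm (norm_nonneg _) (by positivity)
  have hgoal : specNorm (P * D * M⁻¹ * Dᵀ * P)
      = ‖((((Tm P).comp (Tm D)).comp (Tm M⁻¹)).comp (Tm Dᵀ)).comp (Tm P)‖ := by
    rw [specNorm_eq, Tm_mul, Tm_mul, Tm_mul, Tm_mul]
  calc specNorm (P * D * M⁻¹ * Dᵀ * P)
      ≤ ν * s * ε⁻¹ * s * ν := by rw [hgoal]; exact b4
  _ = ν ^ 2 * t / ε := by rw [hts]; field_simp
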